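/- Let each individual in a Galton–Watson branching process produce offspring according to a distribution $(r_s)_{s \ge 0}$ on the non-negative integers, starting with $k$ initial individuals, and let $Z$ denote the total progeny (including the initial individuals). Then for every $n \ge k$, $P(Z = n) = \frac{k}{n} \, P(X_1 + \cdots + X_n = n - k)$, where $X_1, \ldots, X_n$ are i.i.d. with distribution $(r_s)$. -/

import Mathlib

open scoped ENNReal

/-- The exploration walk after `m` steps: starting at `k`, the walk of a branching
process started from `k` individuals moves by `x_i - 1` at each step; `walkSum n x m`
is the displacement `∑_{i<m} (x_i - 1)`. -/
def walkSum (n : ℕ) (x : Fin n → ℕ) (m : ℕ) : ℤ :=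
  ∑ i ∈ Finset.univ.filter (fun i : Fin n => (i : ℕ) < m), ((x i : ℤ) - 1)

/-- The event that the total progeny of a branching process started from `k`
individuals, with offspring counts `x_0, x_1, …` in exploration (depth-first) order,
equals `n`: the exploration walk started at `k` first hits `0` at time `n`. -/
def progenyEvent (k n : ℕ) (x : Fin n → ℕ) : Prop :=
  (∀ m : ℕ, m < n → -(k : ℤ) < walkSum n x m) ∧ walkSum n x n = -(k : ℤ)

instance (k n : ℕ) : DecidablePred (progenyEvent k n) := fun _ => by
  unfold progenyEvent; infer_instance

/-- The probability that the total progeny of a branching process started from `k`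
individuals with offspring distribution `r` equals `n`. -/
noncomputable def progenyProb (r : ℕ → ℝ≥0∞) (k n : ℕ) : ℝ≥0∞ :=
  ∑' x : Fin n → ℕ, if progenyEvent k n x then ∏ i, r (x i) else 0

namespace DwassAux

def psum (b : ℕ → ℤ) (t : ℕ) : ℤ := ∑ i ∈ Finset.range t, b i

lemma psum_succ (b : ℕ → ℤ) (t : ℕ) : psum b (t + 1) = psum b t + b t :=
  Finset.sum_range_succ _ _

lemma psum_add (b : ℕ → ℤ) (a m : ℕ) :
    psum b (a + m) = psum b a + ∑ i ∈ Finset.range m, b (a + i) := by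
  induction m with
  | zero => simp
  | succ m ih =>
    rw [← Nat.add_assoc, psum_succ, ih, Finset.sum_range_succ]
    ring

/-- `walkSum` as a sum over `Finset.range`. -/
lemma walkSum_eq_range (n : ℕ) (y : Fin n → ℕ) (c : ℕ → ℤ)
    (hc : ∀ i : Fin n, c (i : ℕ) = (y i : ℤ) - 1) (m : ℕ) (hm : m ≤ n) :
    walkSum n y m = ∑ i ∈ Finset.range m, c i := by
  unfold walkSum
  apply Finset.sum_bij (fun (i : Fin n) _ => (i : ℕ))
  · intro a ha
    rw [Finset.mem_filter] at ha
    exact Finset.mem_range.2 ha.2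
  · intro a₁ _ a₂ _ h
    exact Fin.val_injective h
  · intro b hb
    rw [Finset.mem_range] at hb
    exact ⟨⟨b, lt_of_lt_of_le hb hm⟩, Finset.mem_filter.2 ⟨Finset.mem_univ _, hb⟩, rfl⟩
  · intro a _
    rw [hc a]

lemma shift_sum (b : ℕ → ℤ) (n : ℕ) (hper : ∀ t, b (t + n) = b t) (j : ℕ) :
    ∑ i ∈ Finset.range n, b (j + i) = psum b n := by
  induction j with
  | zero => simp [psum]
  | succ j ih =>
    have h1 : ∑ i ∈ Finset.range (n + 1), b (j + i)
        = ∑ i ∈ Finset.range n, b (j + i) + b (j + n) := Finset.sum_range_succ _ _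
    have h2 : ∑ i ∈ Finset.range (n + 1), b (j + i)
        = ∑ i ∈ Finset.range n, b (j + (i + 1)) + b (j + 0) := Finset.sum_range_succ' _ _
    have h3 : ∀ i, b (j + (i + 1)) = b (j + 1 + i) := by intro i; ring_nf
    have h4 : b (j + n) = b j := hper j
    rw [Finset.sum_congr rfl (fun i _ => h3 i)] at h2
    simp only [Nat.add_zero] at h2
    have : ∑ i ∈ Finset.range n, b (j + 1 + i) = ∑ i ∈ Finset.range n, b (j + i) := by
      omega
    rw [this, ih]

/-- The cycle lemma: if the steps are `≥ -1`, `n`-periodic, and sum to `-k` over a period,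
then exactly `k` of the `n` rotations give a walk staying above `-k` for a full period. -/
lemma cycle_card (n k : ℕ) (hk : 1 ≤ k) (b : ℕ → ℤ) (hb : ∀ t, -1 ≤ b t)
    (hper : ∀ t, b (t + n) = b t) (hsum : psum b n = -(k : ℤ)) :
    ((Finset.range n).filter
      (fun j => ∀ m < n, -(k : ℤ) < psum b (j + m) - psum b j)).card = k := by
  have hn1 : 1 ≤ n := by
    by_contra h
    have : n = 0 := by omega
    subst this
    simp [psum] at hsum
    omega
  have hSper : ∀ t, psum b (t + n) = psum b t - k := by
    intro t
    rw [psum_add, shift_sum b n hper, hsum]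
    ring
  have hne : ((Finset.range n).image (psum b)).Nonempty :=
    Finset.Nonempty.image ⟨0, Finset.mem_range.2 hn1⟩ _
  set μ := ((Finset.range n).image (psum b)).min' hne with hμ
  have hμle : ∀ t < n, μ ≤ psum b t := by
    intro t ht
    exact Finset.min'_le _ _ (Finset.mem_image_of_mem _ (Finset.mem_range.2 ht))
  have hμmem : ∃ t, t < n ∧ psum b t = μ := by
    have := Finset.min'_mem _ hne
    rw [Finset.mem_image] at this
    obtain ⟨t, ht, he⟩ := this
    exact ⟨t, Finset.mem_range.1 ht, he⟩
  have hμub : μ + k ≤ 1 := by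
    have h1 : psum b n = psum b (n - 1) + b (n - 1) := by
      conv_lhs => rw [show n = (n - 1) + 1 by omega, psum_succ]
    have h2 := hb (n - 1)
    have h3 := hμle (n - 1) (by omega)
    omega
  -- equivalence with record characterization
  have hiff : ∀ j < n, ((∀ m < n, -(k : ℤ) < psum b (j + m) - psum b j) ↔
      ((∀ t < j, psum b j < psum b t) ∧ psum b j < μ + k)) := by
    intro j hj
    constructor
    · intro h
      have hrec : ∀ t < j, psum b j < psum b t := by
        intro t ht
        have hm : n + t - j < n := by omega
        have hjm : j + (n + t - j) = t + n := by omega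
        have := h _ hm
        rw [hjm, hSper] at this
        omega
      refine ⟨hrec, ?_⟩
      obtain ⟨t₀, ht₀n, ht₀⟩ := hμmem
      by_cases hcase : j ≤ t₀
      · have := h (t₀ - j) (by omega)
        rw [show j + (t₀ - j) = t₀ by omega] at this
        omega
      · have := hrec t₀ (by omega)
        omega
    · rintro ⟨hrec, hlt⟩ m hm
      by_cases hmn : j + m < n
      · have := hμle (j + m) hmn
        omega
      · have ht : j + m - n < j := by omega
        have heq : j + m = (j + m - n) + n := by omega
        rw [heq, hSper]
        have := hrec _ ht
        omega
  rw [Finset.filter_congr (fun j hj => hiff j (Finset.mem_range.1 hj))]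
  -- bijection with the integer interval [μ, μ + k)
  have hcard : (Finset.Ico μ (μ + k)).card = k := by
    rw [Int.card_Ico]; simp
  conv_rhs => rw [← hcard]
  apply Finset.card_bij (fun j _ => psum b j)
  · intro j hj
    rw [Finset.mem_filter, Finset.mem_range] at hj
    rw [Finset.mem_Ico]
    exact ⟨hμle j hj.1, hj.2.2⟩
  · intro j₁ hj₁ j₂ hj₂ he
    rw [Finset.mem_filter, Finset.mem_range] at hj₁ hj₂
    rcases lt_trichotomy j₁ j₂ with h | h | h
    · have := hj₂.2.1 j₁ h; omega
    · exact h
    · have := hj₁.2.1 j₂ h; omega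
  · intro v hv
    rw [Finset.mem_Ico] at hv
    obtain ⟨t₀, ht₀n, ht₀⟩ := hμmem
    have hv0 : v ≤ 0 := by omega
    have hex : ∃ j, psum b j ≤ v := ⟨t₀, by omega⟩
    obtain ⟨j, hjv, hmin, hjle⟩ : ∃ j, psum b j ≤ v ∧ (∀ t < j, v < psum b t) ∧ j ≤ t₀ :=
      ⟨Nat.find hex, Nat.find_spec hex,
        fun t ht => lt_of_not_ge (Nat.find_min hex ht),
        Nat.find_min' hex (by omega)⟩
    have hje : psum b j = v := by
      match j, hjv, hmin with
      | 0, hjv, _ =>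
        have : psum b 0 = 0 := by simp [psum]
        omega
      | (t + 1), hjv, hmin =>
        have h1 := hmin t (Nat.lt_succ_self t)
        have h2 : psum b (t + 1) = psum b t + b t := psum_succ b t
        have h3 := hb t
        omega
    refine ⟨j, ?_, hje⟩
    rw [Finset.mem_filter, Finset.mem_range]
    refine ⟨by omega, fun t ht => by have := hmin t ht; omega, by omega⟩


end DwassAux

/-- **Dwass's theorem.** For a Galton–Watson branching process started from `k`
individuals with offspring distribution `r`, for every `n ≥ k` the probability that the
total progeny equals `n` is `k/n` times the probability that `n` i.i.d. draws from the
offspring distribution sum to `n - k`. -/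
theorem dwass (r : ℕ → ℝ≥0∞) (hr : ∑' s, r s = 1) (k n : ℕ)
    (hk : 1 ≤ k) (hn : k ≤ n) :
    progenyProb r k n =
      (k : ℝ≥0∞) / (n : ℝ≥0∞) *
        ∑' x : Fin n → ℕ, if (∑ i, x i) = n - k then ∏ i, r (x i) else 0 := by
  classical
  have hn0 : 0 < n := lt_of_lt_of_le hk hn
  haveI : NeZero n := ⟨hn0.ne'⟩
  open DwassAux in
  -- the step sequence of `x`, extended `n`-periodically
  set B : (Fin n → ℕ) → ℕ → ℤ := fun x t => ((x ⟨t % n, Nat.mod_lt t hn0⟩ : ℤ) - 1) with hB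
  have hper : ∀ x t, B x (t + n) = B x t := by
    intro x t; simp [hB, Nat.add_mod_right]
  have hbge : ∀ x t, -1 ≤ B x t := by
    intro x t
    have : (0 : ℤ) ≤ (x ⟨t % n, Nat.mod_lt t hn0⟩ : ℤ) := Int.natCast_nonneg _
    simp only [hB]; omega
  have hpsum_n : ∀ x : Fin n → ℕ, DwassAux.psum (B x) n = (∑ i, (x i : ℤ)) - n := by
    intro x
    unfold DwassAux.psum
    rw [Finset.sum_sub_distrib]
    congr 1
    · rw [← Fin.sum_univ_eq_sum_range (fun t => (x ⟨t % n, Nat.mod_lt t hn0⟩ : ℤ)) n]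
      apply Finset.sum_congr rfl
      intro i _
      have he : (⟨(i : ℕ) % n, Nat.mod_lt _ hn0⟩ : Fin n) = i :=
        Fin.ext (Nat.mod_eq_of_lt i.isLt)
      rw [he]
    · simp
  -- rotations
  open Fin.NatCast in
  set σ : ℕ → (Fin n ≃ Fin n) := fun j => Equiv.addRight (j : Fin n) with hσ
  have hσval : ∀ j < n, ∀ i : Fin n, ((σ j i : ℕ)) = (i + j) % n := by
    intro j hj i
    open Fin.NatCast in
    simp [hσ, Fin.add_def, Fin.val_cast_of_lt hj]
  -- the walk of the rotated sequence
  have hwalk : ∀ j < n, ∀ x : Fin n → ℕ, ∀ m ≤ n,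
      walkSum n (x ∘ σ j) m = DwassAux.psum (B x) (j + m) - DwassAux.psum (B x) j := by
    intro j hj x m hm
    rw [DwassAux.walkSum_eq_range n (x ∘ σ j) (fun t => B x (j + t))]
    · rw [DwassAux.psum_add]; ring
    · intro i
      simp only [hB, Function.comp_apply]
      have he : (⟨(j + (i : ℕ)) % n, Nat.mod_lt _ hn0⟩ : Fin n) = σ j i := by
        apply Fin.ext
        rw [hσval j hj i, Nat.add_comm]
      rw [he]
    · exact hm
  have hshift : ∀ x : Fin n → ℕ, ∀ j, DwassAux.psum (B x) (j + n)
      = DwassAux.psum (B x) j + DwassAux.psum (B x) n := by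
    intro x j
    rw [DwassAux.psum_add, DwassAux.shift_sum (B x) n (hper x) j]
  have hcast : ∀ x : Fin n → ℕ,
      ((∑ i, x i) = n - k ↔ DwassAux.psum (B x) n = -(k : ℤ)) := by
    intro x
    rw [hpsum_n]
    have h1 : ((∑ i, x i : ℕ) : ℤ) = ∑ i, (x i : ℤ) := by push_cast; rfl
    omega
  -- event for the rotated configuration
  have hev : ∀ j < n, ∀ x : Fin n → ℕ,
      progenyEvent k n (x ∘ σ j) ↔
        ((∑ i, x i) = n - k ∧
          ∀ m < n, -(k : ℤ) < DwassAux.psum (B x) (j + m) - DwassAux.psum (B x) j) := by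
    intro j hj x
    constructor
    · rintro ⟨h1, h2⟩
      rw [hwalk j hj x n le_rfl, hshift x j] at h2
      have hpn : DwassAux.psum (B x) n = -(k : ℤ) := by omega
      refine ⟨(hcast x).2 hpn, fun m hm => ?_⟩
      have := h1 m hm
      rwa [hwalk j hj x m hm.le] at this
    · rintro ⟨hsx, h⟩
      have hpn : DwassAux.psum (B x) n = -(k : ℤ) := (hcast x).1 hsx
      constructor
      · intro m hm
        rw [hwalk j hj x m hm.le]
        exact h m hm
      · rw [hwalk j hj x n le_rfl, hshift x j, hpn]
        ring
  -- summing over rotations, for a fixed configuration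
  have hsum_j : ∀ x : Fin n → ℕ,
      ∑ j ∈ Finset.range n, (if progenyEvent k n (x ∘ σ j) then ∏ i, r (x i) else 0)
        = (if (∑ i, x i) = n - k then (k : ℝ≥0∞) * ∏ i, r (x i) else 0) := by
    intro x
    by_cases hx : (∑ i, x i) = n - k
    · have hpn : DwassAux.psum (B x) n = -(k : ℤ) := (hcast x).1 hx
      rw [if_pos hx]
      have hstep : ∀ j ∈ Finset.range n,
          (if progenyEvent k n (x ∘ σ j) then ∏ i, r (x i) else 0)
            = (if (∀ m < n, -(k : ℤ) < DwassAux.psum (B x) (j + m) - DwassAux.psum (B x) j)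
                then ∏ i, r (x i) else 0) := by
        intro j hj
        exact if_congr (by rw [hev j (Finset.mem_range.1 hj) x]; simp [hx]) rfl rfl
      rw [Finset.sum_congr rfl hstep, ← Finset.sum_filter, Finset.sum_const,
        DwassAux.cycle_card n k hk (B x) (hbge x) (hper x) hpn, nsmul_eq_mul]
    · rw [if_neg hx]
      apply Finset.sum_eq_zero
      intro j hj
      rw [if_neg]
      intro hevent
      exact hx ((hev j (Finset.mem_range.1 hj) x).1 hevent).1
  -- reindexing the probability by a rotation
  have h1 : ∀ j, progenyProb r k n
      = ∑' x : Fin n → ℕ, (if progenyEvent k n (x ∘ σ j) then ∏ i, r (x i) else 0) := by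
    intro j
    let E : (Fin n → ℕ) ≃ (Fin n → ℕ) :=
      { toFun := fun x => x ∘ σ j
        invFun := fun x => x ∘ (σ j).symm
        left_inv := fun x => by funext i; simp
        right_inv := fun x => by funext i; simp }
    rw [progenyProb,
      ← Equiv.tsum_eq E (fun x => if progenyEvent k n x then ∏ i, r (x i) else 0)]
    apply tsum_congr
    intro x
    show (if progenyEvent k n (x ∘ σ j) then ∏ i, r ((x ∘ σ j) i) else 0)
      = (if progenyEvent k n (x ∘ σ j) then ∏ i, r (x i) else 0)
    exact if_congr Iff.rfl (Equiv.prod_comp (σ j) (fun i => r (x i))) rfl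
  have key : (n : ℝ≥0∞) * progenyProb r k n
      = (k : ℝ≥0∞) * ∑' x : Fin n → ℕ, if (∑ i, x i) = n - k then ∏ i, r (x i) else 0 := by
    calc (n : ℝ≥0∞) * progenyProb r k n
        = ∑ _j ∈ Finset.range n, progenyProb r k n := by
          rw [Finset.sum_const, Finset.card_range, nsmul_eq_mul]
      _ = ∑ j ∈ Finset.range n, ∑' x : Fin n → ℕ,
            (if progenyEvent k n (x ∘ σ j) then ∏ i, r (x i) else 0) :=
          Finset.sum_congr rfl (fun j _ => h1 j)
      _ = ∑' x : Fin n → ℕ, ∑ j ∈ Finset.range n,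
            (if progenyEvent k n (x ∘ σ j) then ∏ i, r (x i) else 0) :=
          (Summable.tsum_finsetSum (fun j _ => ENNReal.summable)).symm
      _ = ∑' x : Fin n → ℕ, (if (∑ i, x i) = n - k then (k : ℝ≥0∞) * ∏ i, r (x i) else 0) :=
          tsum_congr hsum_j
      _ = (k : ℝ≥0∞) * ∑' x : Fin n → ℕ, if (∑ i, x i) = n - k then ∏ i, r (x i) else 0 := by
          rw [← ENNReal.tsum_mul_left]
          apply tsum_congr
          intro x
          split_ifs <;> simp
  have hne : (n : ℝ≥0∞) ≠ 0 := by
    simp [hn0.ne']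
  have htop : (n : ℝ≥0∞) ≠ ⊤ := ENNReal.natCast_ne_top n
  calc progenyProb r k n
      = (n : ℝ≥0∞)⁻¹ * ((n : ℝ≥0∞) * progenyProb r k n) := by
        rw [← mul_assoc, ENNReal.inv_mul_cancel hne htop, one_mul]
    _ = (n : ℝ≥0∞)⁻¹ * ((k : ℝ≥0∞) *
          ∑' x : Fin n → ℕ, if (∑ i, x i) = n - k then ∏ i, r (x i) else 0) := by
        rw [key]
    _ = (k : ℝ≥0∞) / (n : ℝ≥0∞) *
          ∑' x : Fin n → ℕ, if (∑ i, x i) = n - k then ∏ i, r (x i) else 0 := by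
        rw [div_eq_mul_inv]
        ring
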